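/- Let n ≥ 2 be an integer, ω_{n−1} the surface area of the unit sphere S^{n−1} in ℝⁿ, and α_n = n·ω_{n−1}^{1/(n−1)}. For every nonempty bounded open set Ω ⊆ ℝⁿ and every real β > α_n, the supremum of ∫_Ω exp(β |u|^{n/(n−1)}) dx, taken over all smooth functions u : ℝⁿ → ℝ with compact support contained in Ω satisfying ∫_Ω |∇u|ⁿ dx ≤ 1, is +∞. -/

import Mathlib

open MeasureTheory Real

noncomputable def chiM (M s : ℝ) : ℝ := Real.smoothTransition s * Real.smoothTransition (M - s)

lemma chiM_contDiff (M : ℝ) : ContDiff ℝ (⊤ : ℕ∞) (chiM M) := by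
  unfold chiM
  exact Real.smoothTransition.contDiff.mul
    (Real.smoothTransition.contDiff.comp (contDiff_const.sub contDiff_id))

lemma chiM_nonneg (M s : ℝ) : 0 ≤ chiM M s :=
  mul_nonneg (Real.smoothTransition.nonneg _) (Real.smoothTransition.nonneg _)

lemma chiM_le_one (M s : ℝ) : chiM M s ≤ 1 :=
  mul_le_one₀ (Real.smoothTransition.le_one _) (Real.smoothTransition.nonneg _) (Real.smoothTransition.le_one _)

lemma chiM_zero_left {M s : ℝ} (hs : s ≤ 0) : chiM M s = 0 := by
  simp [chiM, Real.smoothTransition.zero_of_nonpos hs]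

lemma chiM_zero_right {M s : ℝ} (hs : M ≤ s) : chiM M s = 0 := by
  simp [chiM, Real.smoothTransition.zero_of_nonpos (by linarith : M - s ≤ 0)]

lemma chiM_one {M s : ℝ} (h1 : 1 ≤ s) (h2 : s ≤ M - 1) : chiM M s = 1 := by
  simp [chiM, Real.smoothTransition.one_of_one_le h1,
    Real.smoothTransition.one_of_one_le (by linarith : (1:ℝ) ≤ M - s)]

noncomputable def ggM (M t : ℝ) : ℝ := ∫ s in (0:ℝ)..t, chiM M s

lemma chiM_intInt (M a b : ℝ) : IntervalIntegrable (chiM M) volume a b :=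
  ((chiM_contDiff M).continuous).intervalIntegrable a b

lemma hasDerivAt_ggM (M t : ℝ) : HasDerivAt (ggM M) (chiM M t) t :=
  intervalIntegral.integral_hasDerivAt_right (chiM_intInt M 0 t)
    ((chiM_contDiff M).continuous.stronglyMeasurable.stronglyMeasurableAtFilter)
    (chiM_contDiff M).continuous.continuousAt

lemma ggM_contDiff (M : ℝ) : ContDiff ℝ (⊤ : ℕ∞) (ggM M) := by
  rw [contDiff_infty_iff_deriv]
  refine ⟨fun t => (hasDerivAt_ggM M t).differentiableAt, ?_⟩
  have : deriv (ggM M) = chiM M := funext fun t => (hasDerivAt_ggM M t).deriv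
  rw [this]; exact chiM_contDiff M

lemma ggM_nonneg (M : ℝ) {t : ℝ} (ht : 0 ≤ t) : 0 ≤ ggM M t :=
  intervalIntegral.integral_nonneg ht fun s _ => chiM_nonneg M s

lemma ggM_zero (M : ℝ) {t : ℝ} (ht : t ≤ 0) : ggM M t = 0 := by
  unfold ggM
  rw [intervalIntegral.integral_symm t 0]
  rw [intervalIntegral.integral_congr (g := fun _ => (0:ℝ)) ?_, intervalIntegral.integral_zero, neg_zero]
  intro s hs
  rw [Set.uIcc_of_le ht] at hs
  exact chiM_zero_left hs.2

lemma ggM_const (M : ℝ) {t : ℝ} (ht : M ≤ t) : ggM M t = ggM M M := by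
  have h := intervalIntegral.integral_add_adjacent_intervals (chiM_intInt M 0 M) (chiM_intInt M M t)
  have h2 : ∫ s in M..t, chiM M s = 0 := by
    rw [intervalIntegral.integral_congr (g := fun _ => (0:ℝ)) ?_, intervalIntegral.integral_zero]
    intro s hs
    rw [Set.uIcc_of_le ht] at hs
    exact chiM_zero_right hs.1
  unfold ggM
  rw [← h, h2, add_zero]

lemma ggM_ge (M : ℝ) (hM : 2 ≤ M) : M - 2 ≤ ggM M M := by
  have h01 : (0:ℝ) ≤ 1 := zero_le_one
  have h1 : (1:ℝ) ≤ M - 1 := by linarith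
  have hMm : M - 1 ≤ M := by linarith
  have e1 := intervalIntegral.integral_add_adjacent_intervals (chiM_intInt M 0 1) (chiM_intInt M 1 (M-1))
  have e2 := intervalIntegral.integral_add_adjacent_intervals
    ((chiM_intInt M 0 1).trans (chiM_intInt M 1 (M-1))) (chiM_intInt M (M-1) M)
  have mid : ∫ s in (1:ℝ)..(M-1), chiM M s = M - 2 := by
    rw [intervalIntegral.integral_congr (g := fun _ => (1:ℝ)) ?_]
    · simp; ring
    · intro s hs
      rw [Set.uIcc_of_le h1] at hs
      exact chiM_one hs.1 hs.2
  have n1 : 0 ≤ ∫ s in (0:ℝ)..1, chiM M s :=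
    intervalIntegral.integral_nonneg h01 fun s _ => chiM_nonneg M s
  have n3 : 0 ≤ ∫ s in (M-1)..M, chiM M s :=
    intervalIntegral.integral_nonneg hMm fun s _ => chiM_nonneg M s
  have : ggM M M = (∫ s in (0:ℝ)..1, chiM M s) + (M - 2) + ∫ s in (M-1)..M, chiM M s := by
    unfold ggM
    rw [← e2, ← e1, mid]
  linarith

lemma ggM_le (M : ℝ) {t : ℝ} (ht : 0 ≤ t) : ggM M t ≤ t := by
  unfold ggM
  calc (∫ s in (0:ℝ)..t, chiM M s) ≤ ∫ s in (0:ℝ)..t, (1:ℝ) :=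
        intervalIntegral.integral_mono_on ht (chiM_intInt M 0 t)
          intervalIntegrable_const (fun s _ => chiM_le_one M s)
    _ = t := by simp

noncomputable def hprof (R M c q : ℝ) : ℝ :=
  c * ggM M (Real.log R - Real.log (max q ((R * Real.exp (-M) / 2)^2)) / 2)

lemma rr_pos {R M : ℝ} (hR : 0 < R) : 0 < R * Real.exp (-M) := mul_pos hR (Real.exp_pos _)

lemma rr_lt_R {R M : ℝ} (hR : 0 < R) (hM : 0 < M) : R * Real.exp (-M) < R := by
  nlinarith [Real.exp_lt_one_iff.2 (by linarith : -M < 0), Real.exp_pos (-M)]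

lemma log_rr {R M : ℝ} (hR : 0 < R) : Real.log (R * Real.exp (-M)) = Real.log R - M := by
  rw [Real.log_mul (ne_of_gt hR) (ne_of_gt (Real.exp_pos _)), Real.log_exp]; ring

lemma hprof_const {R M c : ℝ} (hR : 0 < R) {q : ℝ} (hq : q < (R * Real.exp (-M))^2) :
    hprof R M c q = c * ggM M M := by
  set r := R * Real.exp (-M) with hr
  have hrpos : 0 < r := rr_pos hR
  have hmaxlt : max q ((r/2)^2) < r^2 := by
    apply max_lt hq
    nlinarith
  have hmaxpos : (0:ℝ) < max q ((r/2)^2) := lt_max_of_lt_right (by positivity)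
  have hlog : Real.log (max q ((r/2)^2)) < 2 * Real.log r := by
    have := Real.log_lt_log hmaxpos hmaxlt
    rwa [Real.log_pow, Nat.cast_ofNat] at this
  have hA : M < Real.log R - Real.log (max q ((r/2)^2)) / 2 := by
    have hlr : Real.log r = Real.log R - M := log_rr hR
    linarith
  unfold hprof
  rw [ggM_const M (le_of_lt hA)]

lemma hprof_zero {R M c : ℝ} (hR : 0 < R) (hM : 0 < M) {q : ℝ} (hq : R^2 ≤ q) :
    hprof R M c q = 0 := by
  set r := R * Real.exp (-M) with hr
  have hrR : r < R := rr_lt_R hR hM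
  have hrpos : 0 < r := rr_pos hR
  have h1 : (r/2)^2 ≤ q := le_trans (by nlinarith) hq
  have hmax : max q ((r/2)^2) = q := max_eq_left h1
  have hqpos : 0 < q := lt_of_lt_of_le (by positivity) h1
  have hA : Real.log R - Real.log q / 2 ≤ 0 := by
    have h2 : Real.log (R^2) ≤ Real.log q := Real.log_le_log (by positivity) hq
    rw [Real.log_pow, Nat.cast_ofNat] at h2
    linarith
  unfold hprof
  rw [hmax, ggM_zero M hA, mul_zero]

lemma hprof_contDiff {R M c : ℝ} (hR : 0 < R) (hM : 0 < M) :
    ContDiff ℝ (⊤ : ℕ∞) (hprof R M c) := by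
  set r := R * Real.exp (-M) with hr
  have hrpos : 0 < r := rr_pos hR
  rw [contDiff_iff_contDiffAt]
  intro q₀
  rcases lt_or_ge q₀ (r^2) with h | h
  · have hev : hprof R M c =ᶠ[nhds q₀] fun _ => c * ggM M M := by
      filter_upwards [eventually_lt_nhds h] with q hq
      exact hprof_const hR hq
    exact (contDiffAt_const).congr_of_eventuallyEq hev
  · have hq₀ : (r/2)^2 < q₀ := lt_of_lt_of_le (by nlinarith) h
    have hev : hprof R M c =ᶠ[nhds q₀]
        fun q => c * ggM M (Real.log R - Real.log q / 2) := by
      filter_upwards [eventually_gt_nhds hq₀] with q hq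
      unfold hprof
      rw [max_eq_left (le_of_lt hq)]
    have hq₀pos : 0 < q₀ := lt_trans (by positivity) hq₀
    have hlog : ContDiffAt ℝ (⊤ : ℕ∞) Real.log q₀ := Real.contDiffAt_log.2 (ne_of_gt hq₀pos)
    have : ContDiffAt ℝ (⊤ : ℕ∞) (fun q => c * ggM M (Real.log R - Real.log q / 2)) q₀ :=
      contDiffAt_const.mul ((ggM_contDiff M).contDiffAt.comp _
        ((contDiffAt_const.sub (hlog.div_const 2))))
    exact this.congr_of_eventuallyEq hev

lemma hasDerivAt_hprof {R M c : ℝ} (hR : 0 < R) {q : ℝ}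
    (hq : (R * Real.exp (-M) / 2)^2 < q) :
    HasDerivAt (hprof R M c)
      (c * chiM M (Real.log R - Real.log q / 2) * (-(2*q)⁻¹)) q := by
  have hqpos : 0 < q := lt_trans (by positivity) hq
  have hev : (fun q => c * ggM M (Real.log R - Real.log q / 2)) =ᶠ[nhds q]
      hprof R M c := by
    filter_upwards [eventually_gt_nhds hq] with p hp
    unfold hprof
    rw [max_eq_left (le_of_lt hp)]
  apply HasDerivAt.congr_of_eventuallyEq ?_ hev.symm
  have h1 : HasDerivAt (fun p => Real.log R - Real.log p / 2) (-(2*q)⁻¹) q := by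
    have := ((Real.hasDerivAt_log (ne_of_gt hqpos)).div_const 2).const_sub (Real.log R)
    exact this.congr_deriv (by ring)
  have h2 := (hasDerivAt_ggM M (Real.log R - Real.log q / 2)).comp q h1
  have h3 := h2.const_mul c
  exact h3.congr_deriv (by ring)

variable {n : ℕ}

noncomputable def uprof (x₀ : EuclideanSpace ℝ (Fin n)) (R M c : ℝ)
    (x : EuclideanSpace ℝ (Fin n)) : ℝ := hprof R M c (‖x - x₀‖^2)

lemma uprof_contDiff (x₀ : EuclideanSpace ℝ (Fin n)) {R M c : ℝ} (hR : 0 < R) (hM : 0 < M) :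
    ContDiff ℝ (⊤ : ℕ∞) (uprof x₀ R M c) := by
  have h1 : ContDiff ℝ (⊤ : ℕ∞) (fun y : EuclideanSpace ℝ (Fin n) => ‖y - x₀‖^2) :=
    (contDiff_id.sub contDiff_const).norm_sq ℝ
  exact (hprof_contDiff hR hM).comp h1

lemma uprof_const (x₀ : EuclideanSpace ℝ (Fin n)) {R M c : ℝ} (hR : 0 < R)
    {x : EuclideanSpace ℝ (Fin n)} (hx : ‖x - x₀‖ < R * Real.exp (-M)) :
    uprof x₀ R M c x = c * ggM M M :=
  hprof_const hR (by
    have := norm_nonneg (x - x₀)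
    nlinarith)

lemma uprof_zero (x₀ : EuclideanSpace ℝ (Fin n)) {R M c : ℝ} (hR : 0 < R) (hM : 0 < M)
    {x : EuclideanSpace ℝ (Fin n)} (hx : R ≤ ‖x - x₀‖) :
    uprof x₀ R M c x = 0 :=
  hprof_zero hR hM (by nlinarith)

lemma uprof_support (x₀ : EuclideanSpace ℝ (Fin n)) {R M c : ℝ} (hR : 0 < R) (hM : 0 < M) :
    Function.support (uprof x₀ R M c) ⊆ Metric.closedBall x₀ R := by
  intro x hx
  rw [Metric.mem_closedBall, dist_eq_norm]
  by_contra h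
  exact hx (uprof_zero x₀ hR hM (le_of_not_ge (by simpa using h)))

lemma uprof_nonneg (x₀ : EuclideanSpace ℝ (Fin n)) {R M c : ℝ} (hc : 0 ≤ c)
    (x : EuclideanSpace ℝ (Fin n)) : 0 ≤ uprof x₀ R M c x := by
  unfold uprof hprof
  rcases le_or_gt (Real.log R - Real.log (max (‖x - x₀‖^2) ((R * Real.exp (-M) / 2)^2)) / 2) 0
    with h | h
  · rw [ggM_zero M h, mul_zero]
  · exact mul_nonneg hc (ggM_nonneg M h.le)

lemma norm_gradient_eq (f : EuclideanSpace ℝ (Fin n) → ℝ) (x : EuclideanSpace ℝ (Fin n)) :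
    ‖gradient f x‖ = ‖fderiv ℝ f x‖ :=
  (InnerProductSpace.toDual ℝ (EuclideanSpace ℝ (Fin n))).symm.norm_map _

lemma norm_gradient_uprof_le (x₀ : EuclideanSpace ℝ (Fin n)) {R M c : ℝ} (hR : 0 < R)
    (hM : 0 < M) (hc : 0 ≤ c) (x : EuclideanSpace ℝ (Fin n)) :
    ‖gradient (uprof x₀ R M c) x‖ ≤
      Set.indicator (Set.Icc (R * Real.exp (-M)) R) (fun t => c / t) ‖x - x₀‖ := by
  set r := R * Real.exp (-M) with hrdef
  have hrpos : 0 < r := rr_pos hR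
  have hind_nonneg : 0 ≤ Set.indicator (Set.Icc r R) (fun t => c / t) ‖x - x₀‖ :=
    Set.indicator_nonneg (fun t ht => div_nonneg hc (le_trans hrpos.le ht.1)) _
  rcases lt_or_ge ‖x - x₀‖ r with hlt | hge
  · -- locally constant
    have hev : uprof x₀ R M c =ᶠ[nhds x] fun _ => c * ggM M M := by
      have hball : x ∈ Metric.ball x₀ r := by rwa [Metric.mem_ball, dist_eq_norm]
      filter_upwards [Metric.isOpen_ball.eventually_mem hball] with y hy
      exact uprof_const x₀ hR (by rwa [Metric.mem_ball, dist_eq_norm] at hy)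
    rw [norm_gradient_eq, hev.fderiv_eq, fderiv_const_apply]
    simpa using hind_nonneg
  rcases lt_or_ge R ‖x - x₀‖ with hgt | hle
  · -- locally zero
    have hev : uprof x₀ R M c =ᶠ[nhds x] fun _ => (0:ℝ) := by
      have hmem : x ∈ (Metric.closedBall x₀ R)ᶜ := by
        simp only [Set.mem_compl_iff, Metric.mem_closedBall, dist_eq_norm, not_le]
        exact hgt
      filter_upwards [Metric.isClosed_closedBall.isOpen_compl.eventually_mem hmem] with y hy
      refine uprof_zero x₀ hR hM ?_
      simp only [Set.mem_compl_iff, Metric.mem_closedBall, dist_eq_norm, not_le] at hy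
      exact hy.le
    rw [norm_gradient_eq, hev.fderiv_eq, fderiv_const_apply]
    simpa using hind_nonneg
  · -- annulus
    set s := ‖x - x₀‖ with hsdef
    have hspos : 0 < s := lt_of_lt_of_le hrpos hge
    have hq : (r/2)^2 < s^2 := by nlinarith
    have hd := hasDerivAt_hprof (c := c) hR hq
    have hsq : HasFDerivAt (fun y : EuclideanSpace ℝ (Fin n) => ‖y - x₀‖^2)
        ((2:ℕ) • ((innerSL ℝ (x - x₀)).comp (ContinuousLinearMap.id ℝ _))) x :=
      ((hasFDerivAt_id x).sub_const x₀).norm_sq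
    have hu := hd.comp_hasFDerivAt x hsq
    have hfd : fderiv ℝ (uprof x₀ R M c) x =
        (c * chiM M (Real.log R - Real.log (s^2) / 2) * (-(2*s^2)⁻¹)) •
          ((2:ℕ) • ((innerSL ℝ (x - x₀)).comp (ContinuousLinearMap.id ℝ _))) := hu.fderiv
    rw [norm_gradient_eq, hfd]
    have hnormD : ‖(2:ℕ) • ((innerSL ℝ (x - x₀)).comp
        (ContinuousLinearMap.id ℝ (EuclideanSpace ℝ (Fin n))))‖ = 2 * s := by
      rw [ContinuousLinearMap.comp_id, RCLike.norm_nsmul ℝ, innerSL_apply_norm]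
      simp [hsdef]
    rw [norm_smul, hnormD]
    have hchi1 := chiM_le_one M (Real.log R - Real.log (s^2) / 2)
    have hchi0 := chiM_nonneg M (Real.log R - Real.log (s^2) / 2)
    set χ := chiM M (Real.log R - Real.log (s^2) / 2) with hχ
    have habs : ‖c * χ * (-(2*s^2)⁻¹)‖ = c * χ * (2*s^2)⁻¹ := by
      rw [Real.norm_eq_abs, abs_mul, abs_neg, abs_inv, abs_of_nonneg (mul_nonneg hc hchi0),
        abs_of_nonneg (by positivity : (0:ℝ) ≤ 2*s^2)]
    rw [habs]
    have hmem : s ∈ Set.Icc r R := ⟨hge, hle⟩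
    rw [Set.indicator_of_mem hmem]
    have : c * χ * (2*s^2)⁻¹ * (2*s) = c * χ / s := by field_simp
    rw [this]
    have hcc : c * χ ≤ c := by nlinarith
    exact (div_le_div_iff_of_pos_right hspos).mpr hcc

lemma uprof_hasCompactSupport (x₀ : EuclideanSpace ℝ (Fin n)) {R M c : ℝ} (hR : 0 < R)
    (hM : 0 < M) : HasCompactSupport (uprof x₀ R M c) :=
  HasCompactSupport.intro (isCompact_closedBall x₀ R) fun x hx =>
    uprof_zero x₀ hR hM (by
      simp only [Metric.mem_closedBall, dist_eq_norm, not_le] at hx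
      exact hx.le)

lemma gradient_continuous {f : EuclideanSpace ℝ (Fin n) → ℝ} (hf : ContDiff ℝ (⊤ : ℕ∞) f) :
    Continuous (gradient f) := by
  have h1 : Continuous (fderiv ℝ f) := hf.continuous_fderiv (by simp)
  exact ((InnerProductSpace.toDual ℝ (EuclideanSpace ℝ (Fin n))).symm.continuous).comp h1

lemma gradient_hasCompactSupport {f : EuclideanSpace ℝ (Fin n) → ℝ}
    (hf : HasCompactSupport f) : HasCompactSupport (gradient f) := by
  have h1 : HasCompactSupport (fderiv ℝ f) := hf.fderiv ℝ
  exact h1.comp_left (g := ⇑(InnerProductSpace.toDual ℝ (EuclideanSpace ℝ (Fin n))).symm)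
    (map_zero _)

lemma energy_bound (hn : 2 ≤ n) (x₀ : EuclideanSpace ℝ (Fin n)) {R M c : ℝ} (hR : 0 < R)
    (hM : 0 < M) (hc : 0 ≤ c) (Ω : Set (EuclideanSpace ℝ (Fin n))) :
    ∫ x in Ω, ‖gradient (uprof x₀ R M c) x‖ ^ n ≤
      (n * (volume (Metric.ball (0 : EuclideanSpace ℝ (Fin n)) 1)).toReal) * (c^n * M) := by
  haveI : Nontrivial (EuclideanSpace ℝ (Fin n)) := by
    have : 0 < Module.finrank ℝ (EuclideanSpace ℝ (Fin n)) := by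
      rw [finrank_euclideanSpace_fin]; omega
    exact Module.nontrivial_of_finrank_pos this
  set r := R * Real.exp (-M) with hrdef
  have hrpos : 0 < r := rr_pos hR
  have hrR : r < R := rr_lt_R hR hM
  set u := uprof x₀ R M c with hu
  set G := fun x : EuclideanSpace ℝ (Fin n) => ‖gradient u x‖ ^ n with hG
  set φ := fun t : ℝ => (Set.indicator (Set.Icc r R) (fun t => c / t) t) ^ n with hφ
  set F := fun y : EuclideanSpace ℝ (Fin n) => φ ‖y‖ with hF
  -- integrability of G
  have hGc : Continuous G := ((gradient_continuous (uprof_contDiff x₀ hR hM)).norm).pow n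
  have hGsupp : HasCompactSupport G := by
    have h := gradient_hasCompactSupport (f := u) (uprof_hasCompactSupport x₀ hR hM)
    have hn0 : n ≠ 0 := by omega
    exact h.comp_left (g := fun t => ‖t‖ ^ n) (by simp [zero_pow hn0])
  have hGi : Integrable G := hGc.integrable_of_hasCompactSupport hGsupp
  -- integrability of F ∘ translation
  have hφmeas : Measurable φ := by
    have : Measurable fun t : ℝ => Set.indicator (Set.Icc r R) (fun t => c / t) t :=
      Measurable.indicator (measurable_const.div measurable_id) measurableSet_Icc
    exact this.pow_const n
  have hFmeas : Measurable F := hφmeas.comp measurable_norm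
  have hFbdd : ∀ y, F y ≤ (c / r) ^ n := by
    intro y
    by_cases hy : ‖y‖ ∈ Set.Icc r R
    · simp only [hF, hφ, Set.indicator_of_mem hy]
      exact pow_le_pow_left₀ (div_nonneg hc (le_trans hrpos.le hy.1)) (by
        apply div_le_div_of_nonneg_left hc hrpos hy.1) n
    · simp only [hF, hφ, Set.indicator_of_notMem hy]
      rw [zero_pow (by omega)]
      positivity
  have hFnonneg : ∀ y, 0 ≤ F y := by
    intro y
    by_cases hy : ‖y‖ ∈ Set.Icc r R
    · simp only [hF, hφ, Set.indicator_of_mem hy]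
      exact pow_nonneg (div_nonneg hc (le_trans hrpos.le hy.1)) n
    · simp only [hF, hφ, Set.indicator_of_notMem hy, zero_pow (show n ≠ 0 by omega), le_refl]
  have hFsupp : ∀ y, y ∉ Metric.closedBall (0 : EuclideanSpace ℝ (Fin n)) R → F y = 0 := by
    intro y hy
    simp only [Metric.mem_closedBall, dist_zero_right, not_le] at hy
    simp only [hF, hφ, Set.indicator_of_notMem (fun h : ‖y‖ ∈ Set.Icc r R => absurd h.2 (not_le.2 hy)),
      zero_pow (show n ≠ 0 by omega)]
  have hFi : Integrable F := by
    have h1 : IntegrableOn F (Metric.closedBall (0 : EuclideanSpace ℝ (Fin n)) R) := by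
      apply Measure.integrableOn_of_bounded (measure_closedBall_lt_top).ne
        hFmeas.aestronglyMeasurable
      filter_upwards with y
      rw [Real.norm_eq_abs, abs_of_nonneg (hFnonneg y)]
      exact hFbdd y
    have h2 : F = Set.indicator (Metric.closedBall (0 : EuclideanSpace ℝ (Fin n)) R) F := by
      ext y
      by_cases hy : y ∈ Metric.closedBall (0 : EuclideanSpace ℝ (Fin n)) R
      · rw [Set.indicator_of_mem hy]
      · rw [Set.indicator_of_notMem hy, hFsupp y hy]
    rw [← integrable_indicator_iff (Metric.isClosed_closedBall.measurableSet)] at h1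
    rwa [h2]
  have hFti : Integrable (fun x => F (x - x₀)) := by
    have := hFi.comp_sub_right x₀
    exact this
  -- pointwise bound
  have hGF : ∀ x, G x ≤ F (x - x₀) :=
    fun x => pow_le_pow_left₀ (norm_nonneg _) (norm_gradient_uprof_le x₀ hR hM hc x) n
  -- chain
  have step1 : ∫ x in Ω, G x ≤ ∫ x, G x :=
    setIntegral_le_integral hGi (Filter.Eventually.of_forall fun x => by
      simp only [hG]; positivity)
  have step2 : ∫ x, G x ≤ ∫ x, F (x - x₀) :=
    integral_mono hGi hFti hGF
  have step3 : ∫ x, F (x - x₀) = ∫ x, F x := integral_sub_right_eq_self F x₀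
  -- polar coordinates
  have step4 : ∫ x, F x = (n * (volume (Metric.ball (0 : EuclideanSpace ℝ (Fin n)) 1)).toReal) * (c^n * M) := by
    have hpolar := MeasureTheory.integral_fun_norm_addHaar
      (volume : Measure (EuclideanSpace ℝ (Fin n))) φ
    rw [hF]
    rw [hpolar]
    have hdim : Module.finrank ℝ (EuclideanSpace ℝ (Fin n)) = n := finrank_euclideanSpace_fin
    rw [hdim]
    have hinner : ∫ y in Set.Ioi (0:ℝ), y ^ (n - 1) • φ y = c^n * M := by
      have hcongr : ∀ y ∈ Set.Ioi (0:ℝ), y ^ (n-1) • φ y =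
          Set.indicator (Set.Icc r R) (fun t => c^n * t⁻¹) y := by
        intro y hy
        have hy0 : (0:ℝ) < y := hy
        by_cases hmem : y ∈ Set.Icc r R
        · rw [smul_eq_mul, hφ]
          simp only [Set.indicator_of_mem hmem]
          have hyne : y ≠ 0 := ne_of_gt hy0
          have hn1 : (n-1) + 1 = n := by omega
          rw [div_pow, ← hn1, pow_succ]
          field_simp
          simp only [Nat.add_sub_cancel]
          ring
        · simp [hφ, Set.indicator_of_notMem hmem, zero_pow (show n ≠ 0 by omega)]
      rw [setIntegral_congr_fun measurableSet_Ioi hcongr]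
      rw [setIntegral_indicator measurableSet_Icc]
      have hinter : Set.Ioi (0:ℝ) ∩ Set.Icc r R = Set.Icc r R :=
        Set.inter_eq_self_of_subset_right (fun y hy => lt_of_lt_of_le hrpos hy.1)
      rw [hinter, integral_Icc_eq_integral_Ioc,
        ← intervalIntegral.integral_of_le hrR.le,
        intervalIntegral.integral_const_mul, integral_inv_of_pos hrpos hR]
      have : R / r = Real.exp M := by
        rw [hrdef, Real.exp_neg]
        field_simp
      rw [this, Real.log_exp]
    rw [hinner, nsmul_eq_mul, smul_eq_mul]
    simp only [measureReal_def]
    ring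
  calc ∫ x in Ω, G x ≤ ∫ x, G x := step1
    _ ≤ ∫ x, F (x - x₀) := step2
    _ = ∫ x, F x := step3
    _ = _ := step4

lemma exp_lower_bound (hn : 2 ≤ n) (x₀ : EuclideanSpace ℝ (Fin n)) {R M c β p : ℝ}
    (hR : 0 < R) (hM : 0 < M) (hc : 0 ≤ c) (hp : 0 ≤ p)
    (Ω : Set (EuclideanSpace ℝ (Fin n))) (hΩb : Bornology.IsBounded Ω)
    (hsub : Metric.closedBall x₀ R ⊆ Ω) :
    (R * Real.exp (-M))^n * (volume (Metric.ball (0:EuclideanSpace ℝ (Fin n)) 1)).toReal *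
      Real.exp (β * (c * ggM M M) ^ p)
      ≤ ∫ x in Ω, Real.exp (β * |uprof x₀ R M c x| ^ p) := by
  haveI : Nontrivial (EuclideanSpace ℝ (Fin n)) := by
    have : 0 < Module.finrank ℝ (EuclideanSpace ℝ (Fin n)) := by
      rw [finrank_euclideanSpace_fin]; omega
    exact Module.nontrivial_of_finrank_pos this
  set r := R * Real.exp (-M) with hrdef
  have hrpos : 0 < r := rr_pos hR
  have hrR : r < R := rr_lt_R hR hM
  set u := uprof x₀ R M c with hu
  set g := fun x => Real.exp (β * |u x| ^ p) with hg
  have hgc : Continuous g := by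
    have h1 : Continuous fun x => |u x| := (uprof_contDiff x₀ hR hM).continuous.abs
    have h2 : Continuous fun x => |u x| ^ p := h1.rpow_const (fun x => Or.inr hp)
    exact Real.continuous_exp.comp (continuous_const.mul h2)
  have hgi : IntegrableOn g Ω := by
    have h1 : IntegrableOn g (closure Ω) :=
      hgc.continuousOn.integrableOn_compact hΩb.isCompact_closure
    exact h1.mono_set subset_closure
  have hball : Metric.ball x₀ r ⊆ Ω :=
    subset_trans (Metric.ball_subset_closedBall.trans
      (Metric.closedBall_subset_closedBall hrR.le)) hsub
  have step1 : ∫ x in Metric.ball x₀ r, g x ≤ ∫ x in Ω, g x :=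
    setIntegral_mono_set hgi
      (Filter.Eventually.of_forall fun x => (Real.exp_pos _).le) hball.eventuallyLE
  have hval : ∀ x ∈ Metric.ball x₀ r, g x = Real.exp (β * (c * ggM M M) ^ p) := by
    intro x hx
    simp only [hg, hu]
    rw [uprof_const x₀ hR (by rwa [Metric.mem_ball, dist_eq_norm] at hx)]
    rw [abs_of_nonneg (mul_nonneg hc (ggM_nonneg M hM.le))]
  have step2 : ∫ x in Metric.ball x₀ r, g x =
      (volume (Metric.ball x₀ r)).toReal * Real.exp (β * (c * ggM M M) ^ p) := by
    rw [setIntegral_congr_fun measurableSet_ball hval, setIntegral_const, smul_eq_mul, measureReal_def]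
  have hvol : (volume (Metric.ball x₀ r)).toReal =
      r^n * (volume (Metric.ball (0:EuclideanSpace ℝ (Fin n)) 1)).toReal := by
    rw [Measure.addHaar_ball (volume) x₀ hrpos.le, ENNReal.toReal_mul,
      ENNReal.toReal_ofReal (by positivity), finrank_euclideanSpace_fin]
  calc r^n * (volume (Metric.ball (0:EuclideanSpace ℝ (Fin n)) 1)).toReal *
        Real.exp (β * (c * ggM M M) ^ p)
      = ∫ x in Metric.ball x₀ r, g x := by rw [step2, hvol]
    _ ≤ ∫ x in Ω, g x := step1

lemma exp_arg_lower {n : ℕ} (hn : 2 ≤ n) {ω β M : ℝ} (hω : 0 < ω) (hM : 2 ≤ M)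
    (hβ : (n:ℝ) * ω ^ ((1:ℝ)/((n:ℝ)-1)) < β) :
    (β * (ω ^ ((1:ℝ)/((n:ℝ)-1)))⁻¹) * M
      - 2 * (β * (ω ^ ((1:ℝ)/((n:ℝ)-1)))⁻¹) * ((n:ℝ)/((n:ℝ)-1))
      ≤ β * ((((ω*M) ^ ((1:ℝ)/(n:ℝ)))⁻¹) * ggM M M) ^ ((n:ℝ)/((n:ℝ)-1)) := by
  have n2 : (2:ℝ) ≤ (n:ℝ) := by exact_mod_cast hn
  have hn1 : (0:ℝ) < (n:ℝ) - 1 := by linarith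
  have hn0 : (0:ℝ) < (n:ℝ) := by linarith
  have hM0 : (0:ℝ) < M := by linarith
  set e : ℝ := (1:ℝ)/((n:ℝ)-1) with he
  set p : ℝ := (n:ℝ)/((n:ℝ)-1) with hp
  have hp1 : 1 ≤ p := by rw [hp, le_div_iff₀ hn1]; linarith
  have hp0 : 0 ≤ p := by linarith
  have hωe : (0:ℝ) < ω ^ e := Real.rpow_pos_of_pos hω e
  have hβ0 : (0:ℝ) < β := lt_trans (by positivity) hβ
  set γ : ℝ := β * (ω ^ e)⁻¹ with hγ
  have hγ0 : 0 < γ := by positivity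
  set c : ℝ := ((ω*M) ^ ((1:ℝ)/(n:ℝ)))⁻¹ with hc
  have hωM : (0:ℝ) < ω * M := by positivity
  have hc0 : (0:ℝ) ≤ c := by positivity
  set V : ℝ := ggM M M with hV
  have hV2 : M - 2 ≤ V := ggM_ge M hM
  -- step A : monotonicity in V
  have hstepA : β * (c * (M-2)) ^ p ≤ β * (c * V) ^ p := by
    apply mul_le_mul_of_nonneg_left _ hβ0.le
    exact Real.rpow_le_rpow (mul_nonneg hc0 (by linarith))
      (mul_le_mul_of_nonneg_left hV2 hc0) hp0
  -- step B : compute c ^ p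
  have hcp : c ^ p = (ω ^ e * M ^ e)⁻¹ := by
    rw [hc, Real.inv_rpow (Real.rpow_nonneg hωM.le _), ← Real.rpow_mul hωM.le]
    have h : (1:ℝ)/(n:ℝ) * p = e := by
      rw [hp, he]; field_simp
    rw [h, Real.mul_rpow hω.le hM0.le]
  have hMe : (0:ℝ) < M ^ e := Real.rpow_pos_of_pos hM0 e
  have h2M : (0:ℝ) ≤ 1 - 2/M := by
    rw [sub_nonneg, div_le_one hM0]; linarith
  have hM2p : (M-2) ^ p = M ^ e * M * (1 - 2/M) ^ p := by
    have h1 : M - 2 = M * (1 - 2/M) := by field_simp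
    have hep : p = e + 1 := by rw [hp, he]; field_simp; ring
    have h2 : M ^ p = M ^ e * M := by
      rw [hep, Real.rpow_add hM0, Real.rpow_one]
    rw [h1, Real.mul_rpow hM0.le h2M, h2]
  have hBern : 1 - 2*p/M ≤ (1 - 2/M) ^ p := by
    have hs : (-1:ℝ) ≤ -(2/M) := by
      rw [neg_le_neg_iff, div_le_one hM0]; linarith
    have h := one_add_mul_self_le_rpow_one_add hs hp1
    have e1 : 1 + -(2/M) = 1 - 2/M := by ring
    have e2 : 1 + p * -(2/M) = 1 - 2*p/M := by ring
    rwa [e1, e2] at h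
  calc γ * M - 2*γ*p = γ * (M * (1 - 2*p/M)) := by
        have h : M * (1 - 2*p/M) = M - 2*p := by field_simp
        rw [h]; ring
    _ ≤ γ * (M * (1 - 2/M)^p) := by
        apply mul_le_mul_of_nonneg_left _ hγ0.le
        exact mul_le_mul_of_nonneg_left hBern hM0.le
    _ = β * (c^p * (M-2)^p) := by
        rw [hcp, hM2p, hγ]
        field_simp
    _ = β * (c * (M-2))^p := by rw [Real.mul_rpow hc0 (by linarith)]
    _ ≤ β * (c * V)^p := hstepA

/-- The surface area of the unit sphere `S^{n-1} ⊆ ℝⁿ`, equal to `n` times the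
Lebesgue measure of the unit ball in `ℝⁿ`. -/
noncomputable def sphereArea (n : ℕ) : ℝ :=
  n * (volume (Metric.ball (0 : EuclideanSpace ℝ (Fin n)) 1)).toReal

/-- Sharpness of the constant `α_n = n ω_{n-1}^{1/(n-1)}` in Moser's inequality: for every
nonempty bounded open `Ω ⊆ ℝⁿ` and every `β > α_n`, the supremum of
`∫_Ω exp(β |u|^{n/(n-1)})` over smooth `u` with compact support in `Ω` and
`∫_Ω |∇u|ⁿ ≤ 1` is `+∞`. -/
theorem moser_sharpness (n : ℕ) (hn : 2 ≤ n) (Ω : Set (EuclideanSpace ℝ (Fin n)))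
    (hΩo : IsOpen Ω) (hΩb : Bornology.IsBounded Ω) (hΩne : Ω.Nonempty)
    (β : ℝ) (hβ : (n : ℝ) * sphereArea n ^ ((1 : ℝ) / ((n : ℝ) - 1)) < β) :
    ∀ C : ℝ, ∃ u : EuclideanSpace ℝ (Fin n) → ℝ, ContDiff ℝ (⊤ : ℕ∞) u ∧
      HasCompactSupport u ∧ tsupport u ⊆ Ω ∧
      (∫ x in Ω, ‖gradient u x‖ ^ n) ≤ 1 ∧
      C < ∫ x in Ω, Real.exp (β * |u x| ^ ((n : ℝ) / ((n : ℝ) - 1))) := by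
  intro C
  have n2 : (2:ℝ) ≤ (n:ℝ) := by exact_mod_cast hn
  have hn1 : (0:ℝ) < (n:ℝ) - 1 := by linarith
  have hn0 : (0:ℝ) < (n:ℝ) := by linarith
  haveI : Nontrivial (EuclideanSpace ℝ (Fin n)) := by
    have : 0 < Module.finrank ℝ (EuclideanSpace ℝ (Fin n)) := by
      rw [finrank_euclideanSpace_fin]; omega
    exact Module.nontrivial_of_finrank_pos this
  set volB := (volume (Metric.ball (0 : EuclideanSpace ℝ (Fin n)) 1)).toReal with hvolBdef
  have hvolB : 0 < volB :=
    ENNReal.toReal_pos (Metric.measure_ball_pos volume 0 one_pos).ne' measure_ball_lt_top.ne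
  have hωeq : sphereArea n = n * volB := rfl
  have hω : 0 < sphereArea n := by rw [hωeq]; positivity
  set ω := sphereArea n with hωdef
  -- geometry
  obtain ⟨x₀, hx₀⟩ := hΩne
  obtain ⟨ε, hε, hballsub⟩ := Metric.isOpen_iff.1 hΩo x₀ hx₀
  set R : ℝ := ε/2 with hRdef
  have hR : 0 < R := by positivity
  have hsub : Metric.closedBall x₀ R ⊆ Ω :=
    (Metric.closedBall_subset_ball (by linarith)).trans hballsub
  -- constants
  set e : ℝ := (1:ℝ)/((n:ℝ)-1) with he
  set p : ℝ := (n:ℝ)/((n:ℝ)-1) with hp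
  have hp0 : 0 ≤ p := by positivity
  have hωe : (0:ℝ) < ω ^ e := Real.rpow_pos_of_pos hω e
  have hβ0 : (0:ℝ) < β := lt_trans (by positivity) hβ
  set γ : ℝ := β * (ω ^ e)⁻¹ with hγdef
  have hγn : (n:ℝ) < γ := by
    rw [hγdef, ← div_eq_mul_inv]
    exact (lt_div_iff₀ hωe).mpr hβ
  have hγ0 : 0 < γ := lt_trans hn0 hγn
  set K : ℝ := R^n * volB * Real.exp (-(2*γ*p)) with hK
  have hKpos : 0 < K := by positivity
  have htend : Filter.Tendsto (fun M : ℝ => K * Real.exp ((γ - n) * M))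
      Filter.atTop Filter.atTop := by
    apply Filter.Tendsto.const_mul_atTop hKpos
    exact Real.tendsto_exp_atTop.comp
      (Filter.Tendsto.const_mul_atTop (by linarith : (0:ℝ) < γ - n) Filter.tendsto_id)
  obtain ⟨M, hMC, hM2⟩ :=
    ((htend.eventually_gt_atTop C).and (Filter.eventually_ge_atTop (2:ℝ))).exists
  have hM0 : (0:ℝ) < M := by linarith
  set c : ℝ := ((ω*M) ^ ((1:ℝ)/(n:ℝ)))⁻¹ with hc
  have hωM : (0:ℝ) < ω * M := by positivity
  have hc0 : (0:ℝ) ≤ c := by positivity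
  refine ⟨uprof x₀ R M c, uprof_contDiff x₀ hR hM0, uprof_hasCompactSupport x₀ hR hM0,
    ?_, ?_, ?_⟩
  · exact (closure_minimal (uprof_support x₀ hR hM0) Metric.isClosed_closedBall).trans hsub
  · have hE := energy_bound hn x₀ hR hM0 hc0 Ω
    have hcn : c^n = (ω*M)⁻¹ := by
      rw [hc, inv_pow, inv_inj]
      rw [← Real.rpow_natCast ((ω*M) ^ ((1:ℝ)/(n:ℝ))) n, ← Real.rpow_mul hωM.le]
      have h : (1:ℝ)/(n:ℝ) * (n:ℝ) = 1 := by field_simp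
      rw [h, Real.rpow_one]
    have hone : ((n:ℝ) * volB) * (c^n * M) = 1 := by
      rw [hcn, ← hωeq]
      field_simp
    calc ∫ x in Ω, ‖gradient (uprof x₀ R M c) x‖ ^ n ≤ ((n:ℝ) * volB) * (c^n * M) := hE
      _ = 1 := hone
  · have hlow := exp_lower_bound (β := β) hn x₀ hR hM0 hc0 hp0 Ω hΩb hsub
    have harg : γ*M - 2*γ*p ≤ β * (c * ggM M M) ^ p := exp_arg_lower hn hω hM2 hβ
    have heq : K * Real.exp ((γ-n)*M)
        = (R * Real.exp (-M))^n * volB * Real.exp (γ*M - 2*γ*p) := by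
      calc K * Real.exp ((γ-n)*M)
          = R^n * volB * (Real.exp (-(2*γ*p)) * Real.exp ((γ-n)*M)) := by rw [hK]; ring
        _ = R^n * volB * Real.exp (((n:ℝ)*(-M)) + (γ*M - 2*γ*p)) := by
            rw [← Real.exp_add]; congr 1; ring
        _ = R^n * (Real.exp (-M))^n * volB * Real.exp (γ*M - 2*γ*p) := by
            rw [Real.exp_add, Real.exp_nat_mul]; ring
        _ = (R * Real.exp (-M))^n * volB * Real.exp (γ*M - 2*γ*p) := by rw [mul_pow]
    calc C < K * Real.exp ((γ-n)*M) := hMC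
      _ = (R * Real.exp (-M))^n * volB * Real.exp (γ*M - 2*γ*p) := heq
      _ ≤ (R * Real.exp (-M))^n * volB * Real.exp (β * (c * ggM M M)^p) :=
          mul_le_mul_of_nonneg_left (Real.exp_le_exp.2 harg) (by positivity)
      _ ≤ ∫ x in Ω, Real.exp (β * |uprof x₀ R M c x| ^ p) := hlow
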